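/- Let G be a group acting transitively on a countable set Q, let x₀ ∈ Q, and let G_{x₀} be its stabilizer. Let π be the representation of G on ℓ¹₀Q given by (π(g)f)(q) = f(g⁻¹q), and suppose α : G → ℓ¹₀Q satisfies α(1) = 0, α(gh) = α(g) for all g ∈ G and h ∈ G_{x₀}, and is a quasi-cocycle for π, i.e. Δ(α) = sup_{g,g'∈G} ‖α(gg') − α(g) − π(g)α(g')‖ < ∞. Then for every g ∈ G there is a unique bounded linear operator D(g) on ℓ¹₀Q such that D(g)(δ_{x₀} − δ_{g'·x₀}) = α(gg') − α(g) − π(g)α(g') for every g' ∈ G, and it satisfies ‖D(g)‖_op ≤ Δ(α); moreover this family satisfies the Leibniz rule D(gh) = D(g)π(h) + π(g)D(h) for all g,h ∈ G. -/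

import Mathlib

open scoped ENNReal

/-- Any element of `ℓ¹Q` is summable. -/
theorem l1summable {Q : Type*} (f : lp (fun _ : Q => ℝ) 1) : Summable fun q : Q => f q := by
  have h := (lp.memℓp f).summable (p := 1) (by norm_num)
  simp only [ENNReal.toReal_one, Real.rpow_one] at h
  exact h.of_norm

/-- `ℓ¹₀Q`, the subspace of zero-sum elements of `ℓ¹Q`. -/
noncomputable def l1zero (Q : Type*) : Submodule ℝ (lp (fun _ : Q => ℝ) 1) where
  carrier := {f | ∑' q : Q, f q = 0}
  add_mem' := by
    intro f g hf hg
    simp only [Set.mem_setOf_eq] at *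
    have hpt : ∀ q : Q, (f + g) q = f q + g q := fun q => by
      rw [lp.coeFn_add]; rfl
    rw [tsum_congr hpt, (l1summable f).tsum_add (l1summable g), hf, hg, add_zero]
  zero_mem' := by
    simp only [Set.mem_setOf_eq]
    have hpt : ∀ q : Q, (0 : lp (fun _ : Q => ℝ) 1) q = 0 := fun q => by
      rw [lp.coeFn_zero]; rfl
    rw [tsum_congr hpt, tsum_zero]
  smul_mem' := by
    intro c f hf
    simp only [Set.mem_setOf_eq] at *
    have hpt : ∀ q : Q, (c • f) q = c * f q := fun q => by
      rw [lp.coeFn_smul]; rfl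
    rw [tsum_congr hpt, tsum_mul_left, hf, mul_zero]

section Aux

set_option maxHeartbeats 1000000
set_option synthInstance.maxHeartbeats 400000

theorem l1abs_summable {Q : Type*} (f : lp (fun _ : Q => ℝ) 1) : Summable fun q : Q => |f q| := by
  have h := (lp.memℓp f).summable (p := 1) (by norm_num)
  simpa [Real.norm_eq_abs] using h

theorem l1norm_eq {Q : Type*} (f : lp (fun _ : Q => ℝ) 1) : ‖f‖ = ∑' q : Q, |f q| := by
  have h := lp.norm_eq_tsum_rpow (p := 1) (by norm_num) f
  simpa [Real.norm_eq_abs] using h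

theorem single_eval {Q : Type*} [DecidableEq Q] (i j : Q) :
    (lp.single 1 i (1 : ℝ) : lp (fun _ : Q => ℝ) 1) j = if j = i then 1 else 0 := by
  by_cases h : j = i
  · subst h; simp [lp.single_apply_self]
  · simp [lp.single_apply_ne 1 i _ h, h]

theorem single_summable {Q : Type*} [DecidableEq Q] (i : Q) (a : ℝ) :
    Summable fun j : Q => (lp.single 1 i a : lp (fun _ : Q => ℝ) 1) j :=
  summable_of_ne_finset_zero (s := {i}) fun j hj =>
    lp.single_apply_ne (E := fun _ : Q => ℝ) 1 i a (Finset.notMem_singleton.mp hj)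

theorem single_tsum {Q : Type*} [DecidableEq Q] (i : Q) :
    ∑' j : Q, (lp.single 1 i (1 : ℝ) : lp (fun _ : Q => ℝ) 1) j = 1 :=
  (tsum_eq_single (f := fun j : Q => (lp.single 1 i (1 : ℝ) : lp (fun _ : Q => ℝ) 1) j) i
      fun j hj => lp.single_apply_ne (E := fun _ : Q => ℝ) 1 i 1 hj).trans
    (lp.single_apply_self (E := fun _ : Q => ℝ) 1 i 1)

/-- The continuous linear functional `f ↦ ∑ f q` on `ℓ¹Q`. -/
noncomputable def l1sumCLM (Q : Type*) [Countable Q] :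
    lp (fun _ : Q => ℝ) 1 →L[ℝ] ℝ :=
  LinearMap.mkContinuous
    { toFun := fun f => ∑' q : Q, f q
      map_add' := fun f g => by
        have hpt : ∀ q : Q, (f + g) q = f q + g q := fun q => by
          rw [lp.coeFn_add]; rfl
        show (∑' q : Q, (f + g) q) = (∑' q : Q, f q) + ∑' q : Q, g q
        rw [tsum_congr hpt, Summable.tsum_add (l1summable f) (l1summable g)]
      map_smul' := fun c f => by
        have hpt : ∀ q : Q, (c • f) q = c * f q := fun q => by
          rw [lp.coeFn_smul]; rfl
        show (∑' q : Q, (c • f) q) = c • ∑' q : Q, f q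
        rw [tsum_congr hpt, tsum_mul_left, smul_eq_mul] }
    1
    (fun f => by
      show ‖∑' q : Q, f q‖ ≤ 1 * ‖f‖
      rw [one_mul, Real.norm_eq_abs]
      calc |∑' q : Q, f q| ≤ ∑' q : Q, |f q| := by
            have h := norm_tsum_le_tsum_norm (f := fun q : Q => f q)
              (by simpa [Real.norm_eq_abs] using l1abs_summable f)
            simpa [Real.norm_eq_abs] using h
        _ = ‖f‖ := (l1norm_eq f).symm)

instance l1zero_completeSpace {Q : Type*} [Countable Q] : CompleteSpace ↥(l1zero Q) := by
  have hc : IsClosed ((l1zero Q : Set (lp (fun _ : Q => ℝ) 1))) := by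
    have he : (l1zero Q : Set (lp (fun _ : Q => ℝ) 1)) = (l1sumCLM Q) ⁻¹' {0} := by
      ext f
      simp only [Set.mem_preimage, Set.mem_singleton_iff]
      exact Iff.rfl
    rw [he]
    exact isClosed_singleton.preimage (l1sumCLM Q).continuous
  exact hc.completeSpace_coe

/-- The generator `δ_q − δ_{x₀}` of `ℓ¹₀Q`. -/
noncomputable def eVec {Q : Type*} [Countable Q] [DecidableEq Q] (x₀ q : Q) : ↥(l1zero Q) :=
  ⟨lp.single 1 q (1 : ℝ) - lp.single 1 x₀ (1 : ℝ), by
    show ∑' j : Q, (lp.single 1 q (1:ℝ) - lp.single 1 x₀ (1:ℝ) : lp (fun _ : Q => ℝ) 1) j = 0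
    have hpt : ∀ j : Q, (lp.single 1 q (1:ℝ) - lp.single 1 x₀ (1:ℝ) : lp (fun _ : Q => ℝ) 1) j
        = (lp.single 1 q (1:ℝ) : lp (fun _ : Q => ℝ) 1) j
          - (lp.single 1 x₀ (1:ℝ) : lp (fun _ : Q => ℝ) 1) j := fun j => by
      rw [lp.coeFn_sub]; rfl
    rw [tsum_congr hpt, Summable.tsum_sub (single_summable q 1) (single_summable x₀ 1),
      single_tsum, single_tsum, sub_self]⟩

theorem eVec_coe {Q : Type*} [Countable Q] [DecidableEq Q] (x₀ q : Q) :
    ((eVec x₀ q : ↥(l1zero Q)) : lp (fun _ : Q => ℝ) 1)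
      = lp.single 1 q (1 : ℝ) - lp.single 1 x₀ (1 : ℝ) := rfl

theorem eVec_apply {Q : Type*} [Countable Q] [DecidableEq Q] (x₀ q j : Q) :
    ((eVec x₀ q : ↥(l1zero Q)) : lp (fun _ : Q => ℝ) 1) j
      = (if j = q then (1:ℝ) else 0) - (if j = x₀ then 1 else 0) := by
  rw [eVec_coe]
  have : (lp.single 1 q (1:ℝ) - lp.single 1 x₀ (1:ℝ) : lp (fun _ : Q => ℝ) 1) j
      = (lp.single 1 q (1:ℝ) : lp (fun _ : Q => ℝ) 1) j
        - (lp.single 1 x₀ (1:ℝ) : lp (fun _ : Q => ℝ) 1) j := by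
    rw [lp.coeFn_sub]; rfl
  rw [this, single_eval, single_eval]

theorem eVec_norm_le {Q : Type*} [Countable Q] [DecidableEq Q] (x₀ q : Q) : ‖(eVec x₀ q : ↥(l1zero Q))‖ ≤ 2 := by
  have : ‖(eVec x₀ q : ↥(l1zero Q))‖
      = ‖(lp.single 1 q (1:ℝ) - lp.single 1 x₀ (1:ℝ) : lp (fun _ : Q => ℝ) 1)‖ := rfl
  rw [this]
  have h0 : (0:ℝ≥0∞) < 1 := by norm_num
  have h1 := lp.norm_single (p := 1) (E := fun _ : Q => ℝ) h0 q (1:ℝ)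
  have h2 := lp.norm_single (p := 1) (E := fun _ : Q => ℝ) h0 x₀ (1:ℝ)
  simp only [norm_one] at h1 h2
  have h3 := norm_sub_le (lp.single 1 q (1:ℝ) : lp (fun _ : Q => ℝ) 1) (lp.single 1 x₀ (1:ℝ))
  rw [h1, h2] at h3
  linarith

theorem coe_apply_add {Q : Type*} [Countable Q] (f g : ↥(l1zero Q)) (q : Q) :
    ((f + g : ↥(l1zero Q)) : lp (fun _ : Q => ℝ) 1) q
      = (f : lp (fun _ : Q => ℝ) 1) q + (g : lp (fun _ : Q => ℝ) 1) q := by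
  rw [Submodule.coe_add, lp.coeFn_add]; rfl

theorem coe_apply_smul {Q : Type*} [Countable Q] (c : ℝ) (f : ↥(l1zero Q)) (q : Q) :
    ((c • f : ↥(l1zero Q)) : lp (fun _ : Q => ℝ) 1) q
      = c * (f : lp (fun _ : Q => ℝ) 1) q := by
  rw [Submodule.coe_smul, lp.coeFn_smul]; rfl

theorem smear_summable {Q : Type*} [Countable Q] (c : Q → ↥(l1zero Q)) {C : ℝ} (hC : ∀ q, ‖c q‖ ≤ C)
    (f : ↥(l1zero Q)) :
    Summable fun q : Q => ((f : lp (fun _ : Q => ℝ) 1) q) • c q := by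
  refine Summable.of_norm (Summable.of_nonneg_of_le (fun q => norm_nonneg _)
    (fun q => ?_) ((l1abs_summable (f : lp (fun _ : Q => ℝ) 1)).mul_right C))
  rw [norm_smul, Real.norm_eq_abs]
  exact mul_le_mul_of_nonneg_left (hC q) (abs_nonneg _)

theorem smear_norm_summable {Q : Type*} [Countable Q] (c : Q → ↥(l1zero Q)) {C : ℝ} (hC : ∀ q, ‖c q‖ ≤ C)
    (f : ↥(l1zero Q)) :
    Summable fun q : Q => ‖((f : lp (fun _ : Q => ℝ) 1) q) • c q‖ :=
  Summable.of_nonneg_of_le (fun q => norm_nonneg _)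
    (fun q => by
      rw [norm_smul, Real.norm_eq_abs]
      exact mul_le_mul_of_nonneg_left (hC q) (abs_nonneg _))
    ((l1abs_summable (f : lp (fun _ : Q => ℝ) 1)).mul_right C)

/-- The bounded operator `f ↦ ∑ f(q) • c(q)` on `ℓ¹₀Q`, for a bounded family `c`. -/
noncomputable def smear {Q : Type*} [Countable Q] (c : Q → ↥(l1zero Q)) {C : ℝ} (hC : ∀ q, ‖c q‖ ≤ C) :
    ↥(l1zero Q) →L[ℝ] ↥(l1zero Q) :=
  LinearMap.mkContinuous
    { toFun := fun f => ∑' q : Q, ((f : lp (fun _ : Q => ℝ) 1) q) • c q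
      map_add' := fun f g => by
        calc ∑' q : Q, (((f + g : ↥(l1zero Q)) : lp (fun _ : Q => ℝ) 1) q) • c q
            = ∑' q : Q, (((f : lp (fun _ : Q => ℝ) 1) q) • c q
              + ((g : lp (fun _ : Q => ℝ) 1) q) • c q) :=
              tsum_congr fun q => by rw [coe_apply_add, add_smul]
          _ = _ := Summable.tsum_add (smear_summable c hC f) (smear_summable c hC g)
      map_smul' := fun r f => by
        simp only [RingHom.id_apply]
        calc ∑' q : Q, (((r • f : ↥(l1zero Q)) : lp (fun _ : Q => ℝ) 1) q) • c q
            = ∑' q : Q, r • (((f : lp (fun _ : Q => ℝ) 1) q) • c q) :=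
              tsum_congr fun q => by rw [coe_apply_smul, mul_smul]
          _ = _ := Summable.tsum_const_smul r (smear_summable c hC f) }
    C
    (fun f => by
      simp only [LinearMap.coe_mk, AddHom.coe_mk]
      calc ‖∑' q : Q, ((f : lp (fun _ : Q => ℝ) 1) q) • c q‖
          ≤ ∑' q : Q, ‖((f : lp (fun _ : Q => ℝ) 1) q) • c q‖ :=
            norm_tsum_le_tsum_norm (smear_norm_summable c hC f)
        _ ≤ ∑' q : Q, |(f : lp (fun _ : Q => ℝ) 1) q| * C := by
            refine Summable.tsum_le_tsum (fun q => ?_) (smear_norm_summable c hC f)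
              ((l1abs_summable (f : lp (fun _ : Q => ℝ) 1)).mul_right C)
            rw [norm_smul, Real.norm_eq_abs]
            exact mul_le_mul_of_nonneg_left (hC q) (abs_nonneg _)
        _ = C * ‖f‖ := by
            rw [tsum_mul_right, mul_comm]
            congr 1
            rw [← l1norm_eq]
            rfl)

theorem smear_apply {Q : Type*} [Countable Q] (c : Q → ↥(l1zero Q)) {C : ℝ} (hC : ∀ q, ‖c q‖ ≤ C)
    (f : ↥(l1zero Q)) :
    smear c hC f = ∑' q : Q, ((f : lp (fun _ : Q => ℝ) 1) q) • c q := rfl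

theorem smear_apply_eVec {Q : Type*} [Countable Q] [DecidableEq Q] (x₀ : Q) (c : Q → ↥(l1zero Q)) {C : ℝ} (hC : ∀ q, ‖c q‖ ≤ C)
    (q' : Q) : smear c hC (eVec x₀ q') = c q' - c x₀ := by
  rw [smear_apply]
  have hpt : ∀ q : Q, ((eVec x₀ q' : ↥(l1zero Q)) : lp (fun _ : Q => ℝ) 1) q • c q
      = ((lp.single 1 q' (1:ℝ) : lp (fun _ : Q => ℝ) 1) q) • c q
        - ((lp.single 1 x₀ (1:ℝ) : lp (fun _ : Q => ℝ) 1) q) • c q := fun q => by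
    rw [eVec_apply, single_eval, single_eval, sub_smul]
  have hs1 : Summable fun q : Q => ((lp.single 1 q' (1:ℝ) : lp (fun _ : Q => ℝ) 1) q) • c q :=
    summable_of_ne_finset_zero (s := {q'}) fun q hq => by
      rw [lp.single_apply_ne (E := fun _ : Q => ℝ) 1 q' 1 (Finset.notMem_singleton.mp hq), zero_smul]
  have hs2 : Summable fun q : Q => ((lp.single 1 x₀ (1:ℝ) : lp (fun _ : Q => ℝ) 1) q) • c q :=
    summable_of_ne_finset_zero (s := {x₀}) fun q hq => by
      rw [lp.single_apply_ne (E := fun _ : Q => ℝ) 1 x₀ 1 (Finset.notMem_singleton.mp hq), zero_smul]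
  have t1 : ∑' q : Q, ((lp.single 1 q' (1:ℝ) : lp (fun _ : Q => ℝ) 1) q) • c q = c q' := by
    rw [tsum_eq_single (f := fun q : Q =>
        ((lp.single 1 q' (1:ℝ) : lp (fun _ : Q => ℝ) 1) q) • c q) q'
      (fun q hq => by
        show ((lp.single 1 q' (1:ℝ) : lp (fun _ : Q => ℝ) 1) q) • c q = 0
        rw [lp.single_apply_ne (E := fun _ : Q => ℝ) 1 q' 1 hq, zero_smul]),
      lp.single_apply_self (E := fun _ : Q => ℝ), one_smul]
  have t2 : ∑' q : Q, ((lp.single 1 x₀ (1:ℝ) : lp (fun _ : Q => ℝ) 1) q) • c q = c x₀ := by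
    rw [tsum_eq_single (f := fun q : Q =>
        ((lp.single 1 x₀ (1:ℝ) : lp (fun _ : Q => ℝ) 1) q) • c q) x₀
      (fun q hq => by
        show ((lp.single 1 x₀ (1:ℝ) : lp (fun _ : Q => ℝ) 1) q) • c q = 0
        rw [lp.single_apply_ne (E := fun _ : Q => ℝ) 1 x₀ 1 hq, zero_smul]),
      lp.single_apply_self (E := fun _ : Q => ℝ), one_smul]
  rw [tsum_congr hpt, Summable.tsum_sub hs1 hs2, t1, t2]

/-- Every element of `ℓ¹₀Q` is the sum of its coordinates times the generators. -/
theorem eVec_hasSum {Q : Type*} [Countable Q] [DecidableEq Q] (x₀ : Q) (f : ↥(l1zero Q)) :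
    HasSum (fun q : Q => ((f : lp (fun _ : Q => ℝ) 1) q) • eVec x₀ q) f := by
  have hC : ∀ q : Q, ‖(eVec x₀ q : ↥(l1zero Q))‖ ≤ 2 := eVec_norm_le x₀
  have hsum := smear_summable (eVec x₀) hC f
  have key : ((∑' q : Q, ((f : lp (fun _ : Q => ℝ) 1) q) • eVec x₀ q : ↥(l1zero Q))
      : lp (fun _ : Q => ℝ) 1) = (f : lp (fun _ : Q => ℝ) 1) := by
    have hmt : ((∑' q : Q, ((f : lp (fun _ : Q => ℝ) 1) q) • eVec x₀ q : ↥(l1zero Q))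
        : lp (fun _ : Q => ℝ) 1)
        = ∑' q : Q, ((l1zero Q).subtypeL (((f : lp (fun _ : Q => ℝ) 1) q) • eVec x₀ q)) :=
      ContinuousLinearMap.map_tsum ((l1zero Q).subtypeL) hsum
    rw [hmt]
    have hco : ∀ q : Q, ((l1zero Q).subtypeL (((f : lp (fun _ : Q => ℝ) 1) q) • eVec x₀ q))
        = lp.single 1 q ((f : lp (fun _ : Q => ℝ) 1) q)
          - ((f : lp (fun _ : Q => ℝ) 1) q) • lp.single 1 x₀ (1:ℝ) := fun q => by
      have : ((l1zero Q).subtypeL (((f : lp (fun _ : Q => ℝ) 1) q) • eVec x₀ q))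
          = ((f : lp (fun _ : Q => ℝ) 1) q) • (lp.single 1 q (1:ℝ) - lp.single 1 x₀ (1:ℝ)) := rfl
      rw [this, smul_sub]
      congr 1
      rw [← lp.single_smul, smul_eq_mul, mul_one]
    rw [tsum_congr hco]
    have hs1 : Summable fun q : Q => lp.single 1 q ((f : lp (fun _ : Q => ℝ) 1) q) :=
      (lp.hasSum_single (by norm_num) (f : lp (fun _ : Q => ℝ) 1)).summable
    have hs2 : Summable fun q : Q =>
        ((f : lp (fun _ : Q => ℝ) 1) q) • (lp.single 1 x₀ (1:ℝ) : lp (fun _ : Q => ℝ) 1) :=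
      (l1summable (f : lp (fun _ : Q => ℝ) 1)).smul_const _
    rw [Summable.tsum_sub hs1 hs2,
      (lp.hasSum_single (by norm_num) (f : lp (fun _ : Q => ℝ) 1)).tsum_eq,
      Summable.tsum_smul_const (l1summable (f : lp (fun _ : Q => ℝ) 1))]
    have hz : ∑' q : Q, (f : lp (fun _ : Q => ℝ) 1) q = 0 := f.2
    rw [hz, zero_smul, sub_zero]
  have := hsum.hasSum
  rwa [Subtype.ext key] at this

/-- A continuous operator on `ℓ¹₀Q` is determined by its values on the generators. -/
theorem clm_ext_eVec {Q : Type*} [Countable Q] [DecidableEq Q] (x₀ : Q) (T₁ T₂ : ↥(l1zero Q) →L[ℝ] ↥(l1zero Q))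
    (h : ∀ q : Q, T₁ (eVec x₀ q) = T₂ (eVec x₀ q)) : T₁ = T₂ := by
  refine ContinuousLinearMap.ext fun f => ?_
  have h1 := eVec_hasSum x₀ f
  have e1 : T₁ f = ∑' q : Q, ((f : lp (fun _ : Q => ℝ) 1) q) • T₁ (eVec x₀ q) :=
    calc T₁ f = T₁ (∑' q : Q, ((f : lp (fun _ : Q => ℝ) 1) q) • eVec x₀ q) := by
          rw [h1.tsum_eq]
      _ = ∑' q : Q, T₁ (((f : lp (fun _ : Q => ℝ) 1) q) • eVec x₀ q) :=
          ContinuousLinearMap.map_tsum T₁ h1.summable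
      _ = ∑' q : Q, ((f : lp (fun _ : Q => ℝ) 1) q) • T₁ (eVec x₀ q) :=
          tsum_congr fun q => T₁.map_smul _ _
  have e2 : T₂ f = ∑' q : Q, ((f : lp (fun _ : Q => ℝ) 1) q) • T₂ (eVec x₀ q) :=
    calc T₂ f = T₂ (∑' q : Q, ((f : lp (fun _ : Q => ℝ) 1) q) • eVec x₀ q) := by
          rw [h1.tsum_eq]
      _ = ∑' q : Q, T₂ (((f : lp (fun _ : Q => ℝ) 1) q) • eVec x₀ q) :=
          ContinuousLinearMap.map_tsum T₂ h1.summable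
      _ = ∑' q : Q, ((f : lp (fun _ : Q => ℝ) 1) q) • T₂ (eVec x₀ q) :=
          tsum_congr fun q => T₂.map_smul _ _
  rw [e1, e2]
  exact tsum_congr fun q => by rw [h q]

theorem coe_apply_sub {Q : Type*} [Countable Q] (f g : ↥(l1zero Q)) (q : Q) :
    ((f - g : ↥(l1zero Q)) : lp (fun _ : Q => ℝ) 1) q
      = (f : lp (fun _ : Q => ℝ) 1) q - (g : lp (fun _ : Q => ℝ) 1) q := by
  have : ((f - g : ↥(l1zero Q)) : lp (fun _ : Q => ℝ) 1)
      = (f : lp (fun _ : Q => ℝ) 1) - (g : lp (fun _ : Q => ℝ) 1) := rfl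
  rw [this, lp.coeFn_sub]; rfl

theorem smear_norm_le {Q : Type*} [Countable Q] (c : Q → ↥(l1zero Q)) {C : ℝ}
    (hC : ∀ q, ‖c q‖ ≤ C) (h0 : 0 ≤ C) : ‖smear c hC‖ ≤ C :=
  LinearMap.mkContinuous_norm_le _ h0 _

end Aux


/-- Given a transitive action of `G` on a countable set `Q`, the regular representation `π` on
`ℓ¹₀Q` (given by `(π(g)f)(q) = f(g⁻¹q)`) and a quasi-cocycle `α` for `π` with defect at most
`Δ`, vanishing at `1` and invariant under the stabilizer of `x₀`, there is a unique family of
bounded operators `D(g)` on `ℓ¹₀Q` with `D(g)(δ_{x₀} − δ_{g'·x₀}) = α(gg') − α(g) − π(g)α(g')`;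
it satisfies `‖D(g)‖ ≤ Δ` and the Leibniz rule `D(gh) = D(g)π(h) + π(g)D(h)`. -/
theorem exists_unique_bounded_derivation {G Q : Type*} [Group G] [Countable Q]
    [DecidableEq Q] [MulAction G Q] [MulAction.IsPretransitive G Q] (x₀ : Q)
    (π : G → (↥(l1zero Q) →L[ℝ] ↥(l1zero Q)))
    (hπ1 : π 1 = 1) (hπmul : ∀ g h : G, π (g * h) = π g ∘L π h)
    (hπpt : ∀ (g : G) (f : ↥(l1zero Q)) (q : Q),
      ((π g f : ↥(l1zero Q)) : lp (fun _ : Q => ℝ) 1) q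
        = (f : lp (fun _ : Q => ℝ) 1) (g⁻¹ • q))
    (α : G → ↥(l1zero Q)) (hα1 : α 1 = 0)
    (hαstab : ∀ g h : G, h ∈ MulAction.stabilizer G x₀ → α (g * h) = α g)
    (Δ : ℝ) (hΔ : ∀ g g' : G, ‖α (g * g') - α g - π g (α g')‖ ≤ Δ) :
    ∃ D : G → (↥(l1zero Q) →L[ℝ] ↥(l1zero Q)),
      (∀ (g g' : G) (v : ↥(l1zero Q)),
        (v : lp (fun _ : Q => ℝ) 1)
            = lp.single 1 x₀ (1 : ℝ) - lp.single 1 (g' • x₀) (1 : ℝ) →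
        D g v = α (g * g') - α g - π g (α g')) ∧
      (∀ g : G, ‖D g‖ ≤ Δ) ∧
      (∀ (g : G) (D' : ↥(l1zero Q) →L[ℝ] ↥(l1zero Q)),
        (∀ (g' : G) (v : ↥(l1zero Q)),
          (v : lp (fun _ : Q => ℝ) 1)
              = lp.single 1 x₀ (1 : ℝ) - lp.single 1 (g' • x₀) (1 : ℝ) →
          D' v = α (g * g') - α g - π g (α g')) → D' = D g) ∧
      (∀ g h : G, D (g * h) = D g ∘L π h + π g ∘L D h) := by
    classical
  have hΔ0 : (0 : ℝ) ≤ Δ := le_trans (norm_nonneg _) (hΔ 1 1)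
  choose gq hgq using fun q : Q => MulAction.exists_smul_eq G x₀ q
  -- the quasi-cocycle defect family
  have hcnorm : ∀ (g : G) (q : Q),
      ‖-(α (g * gq q) - α g - π g (α (gq q)))‖ ≤ Δ := fun g q => by
    rw [norm_neg]; exact hΔ g (gq q)
  have hβwell : ∀ g g' : G,
      α (g * gq (g' • x₀)) - α g - π g (α (gq (g' • x₀)))
        = α (g * g') - α g - π g (α g') := by
    intro g g'
    have hstab : g'⁻¹ * gq (g' • x₀) ∈ MulAction.stabilizer G x₀ := by
      rw [MulAction.mem_stabilizer_iff, mul_smul, hgq (g' • x₀), inv_smul_smul]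
    have hrep : gq (g' • x₀) = g' * (g'⁻¹ * gq (g' • x₀)) := by group
    rw [hrep, ← mul_assoc g g' (g'⁻¹ * gq (g' • x₀)),
      hαstab (g * g') _ hstab, hαstab g' _ hstab]
  have hcx0 : ∀ g : G, -(α (g * gq x₀) - α g - π g (α (gq x₀))) = 0 := by
    intro g
    have hstab0 : gq x₀ ∈ MulAction.stabilizer G x₀ := by
      rw [MulAction.mem_stabilizer_iff]; exact hgq x₀
    have h1 : α (gq x₀) = 0 := by
      rw [← one_mul (gq x₀), hαstab 1 _ hstab0, hα1]
    rw [hαstab g _ hstab0, h1, map_zero, sub_zero, sub_self, neg_zero]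
  -- the derivation
  have hDe : ∀ (g : G) (q : Q),
      smear (fun q' : Q => -(α (g * gq q') - α g - π g (α (gq q')))) (hcnorm g)
          (eVec x₀ q)
        = -(α (g * gq q) - α g - π g (α (gq q))) := by
    intro g q
    rw [smear_apply_eVec x₀ _ (hcnorm g) q]
    beta_reduce
    rw [hcx0 g, sub_zero]
  have hvneg : ∀ (g' : G) (v : ↥(l1zero Q)),
      (v : lp (fun _ : Q => ℝ) 1)
          = lp.single 1 x₀ (1 : ℝ) - lp.single 1 (g' • x₀) (1 : ℝ) →
        v = -(eVec x₀ (g' • x₀)) := by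
    intro g' v hv
    apply Subtype.ext
    have hc : ((-(eVec x₀ (g' • x₀)) : ↥(l1zero Q)) : lp (fun _ : Q => ℝ) 1)
        = -((eVec x₀ (g' • x₀) : ↥(l1zero Q)) : lp (fun _ : Q => ℝ) 1) := rfl
    rw [hv, hc, eVec_coe, neg_sub]
  have hπe : ∀ (k : G) (q : Q),
      π k (eVec x₀ q) = eVec x₀ (k • q) - eVec x₀ (k • x₀) := by
    intro k q
    refine Subtype.ext (lp.ext (funext fun r => ?_))
    show ((π k (eVec x₀ q) : ↥(l1zero Q)) : lp (fun _ : Q => ℝ) 1) r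
      = ((eVec x₀ (k • q) - eVec x₀ (k • x₀) : ↥(l1zero Q)) : lp (fun _ : Q => ℝ) 1) r
    rw [hπpt k (eVec x₀ q) r, coe_apply_sub, eVec_apply, eVec_apply, eVec_apply]
    have e1 : (k⁻¹ • r = q) = (r = k • q) := by
      rw [inv_smul_eq_iff]
    have e2 : (k⁻¹ • r = x₀) = (r = k • x₀) := by
      rw [inv_smul_eq_iff]
    simp only [e1, e2]
    ring
  -- the specification
  have hspec : ∀ (g g' : G) (v : ↥(l1zero Q)),
      (v : lp (fun _ : Q => ℝ) 1)
          = lp.single 1 x₀ (1 : ℝ) - lp.single 1 (g' • x₀) (1 : ℝ) →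
      smear (fun q' : Q => -(α (g * gq q') - α g - π g (α (gq q')))) (hcnorm g) v
        = α (g * g') - α g - π g (α g') := by
    intro g g' v hv
    rw [hvneg g' v hv, map_neg, hDe g (g' • x₀), neg_neg]
    exact hβwell g g'
  -- uniqueness
  have huniq : ∀ (g : G) (D' : ↥(l1zero Q) →L[ℝ] ↥(l1zero Q)),
      (∀ (g' : G) (v : ↥(l1zero Q)),
        (v : lp (fun _ : Q => ℝ) 1)
            = lp.single 1 x₀ (1 : ℝ) - lp.single 1 (g' • x₀) (1 : ℝ) →
        D' v = α (g * g') - α g - π g (α g')) →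
      D' = smear (fun q' : Q => -(α (g * gq q') - α g - π g (α (gq q')))) (hcnorm g) := by
    intro g D' hD'
    refine clm_ext_eVec x₀ _ _ fun q => ?_
    have hv : ((-(eVec x₀ q) : ↥(l1zero Q)) : lp (fun _ : Q => ℝ) 1)
        = lp.single 1 x₀ (1 : ℝ) - lp.single 1 ((gq q) • x₀) (1 : ℝ) := by
      rw [hgq q]
      have hc : ((-(eVec x₀ q) : ↥(l1zero Q)) : lp (fun _ : Q => ℝ) 1)
          = -((eVec x₀ q : ↥(l1zero Q)) : lp (fun _ : Q => ℝ) 1) := rfl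
      rw [hc, eVec_coe, neg_sub]
    have h1 := hD' (gq q) (-(eVec x₀ q)) hv
    rw [map_neg] at h1
    have h2 : D' (eVec x₀ q) = -(α (g * gq q) - α g - π g (α (gq q))) := by
      rw [← neg_neg (D' (eVec x₀ q)), h1]
    rw [h2, hDe g q]
  refine ⟨fun g =>
    smear (fun q' : Q => -(α (g * gq q') - α g - π g (α (gq q')))) (hcnorm g),
    ?_, ?_, ?_, ?_⟩
  · exact hspec
  · intro g
    exact smear_norm_le _ (hcnorm g) hΔ0
  · exact huniq
  · intro g h
    refine (huniq (g * h)
      (smear (fun q' : Q => -(α (g * gq q') - α g - π g (α (gq q')))) (hcnorm g) ∘L π h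
        + π g ∘L smear (fun q' : Q => -(α (h * gq q') - α h - π h (α (gq q')))) (hcnorm h))
      ?_).symm
    intro g' v hv
    rw [ContinuousLinearMap.add_apply, ContinuousLinearMap.comp_apply,
      ContinuousLinearMap.comp_apply, hspec h g' v hv, hvneg g' v hv, map_neg,
      hπe h (g' • x₀), neg_sub, map_sub, hDe g (h • x₀), hDe g (h • (g' • x₀)),
      ← mul_smul h g' x₀, hβwell g h, hβwell g (h * g'),
      map_sub (π g), map_sub (π g), hπmul g h, ContinuousLinearMap.comp_apply,
      mul_assoc g h g']
    abel
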